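/- As N → ∞, (1/N)·(L_1(N) − 2N·∑ p^{−α}) → 0, where the sum runs over all prime powers p^α ≤ N with p prime and α ≥ 1. -/

import Mathlib

open scoped Classical
open Filter

/-- `Ω(N)`: the number of prime factors of `N` counted with multiplicity. -/
def bigOmega (N : ℕ) : ℕ := N.primeFactorsList.length

/-- `L_1(N) = Ω(N) + 2 ∑_{M=2}^{N-1} Ω(M)`, with `L_1(1) = 0`. -/
def L1 (N : ℕ) : ℕ := bigOmega N + 2 * ∑ M ∈ Finset.Icc 2 (N - 1), bigOmega M

/-- `Ω(M)` equals the number of prime-power divisors of `M`. -/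
lemma bigOmega_eq_card (M : ℕ) :
    bigOmega M = ((M.divisors).filter IsPrimePow).card := by
  induction M using Nat.recOnPosPrimePosCoprime with
  | prime_pow p n hp hn =>
      have hp' : p.Prime := hp
      have h1 : bigOmega (p ^ n) = n := by
        rw [bigOmega, hp'.primeFactorsList_pow, List.length_replicate]
      rw [h1, Nat.divisors_prime_pow hp', Finset.filter_map, Finset.card_map]
      have h2 : (Finset.range (n+1)).filter
          (IsPrimePow ∘ (⟨(p ^ ·), Nat.pow_right_injective hp'.two_le⟩ : ℕ ↪ ℕ))
          = (Finset.range (n+1)).erase 0 := by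
        ext j
        simp only [Finset.mem_filter, Finset.mem_erase, Finset.mem_range,
          Function.comp, Function.Embedding.coeFn_mk]
        constructor
        · rintro ⟨hj, hpp⟩
          refine ⟨?_, hj⟩
          rintro rfl
          exact not_isPrimePow_one (by simpa using hpp)
        · rintro ⟨hj0, hj⟩
          exact ⟨hj, ⟨p, j, hp.prime, Nat.pos_of_ne_zero hj0, rfl⟩⟩
      rw [h2, Finset.card_erase_of_mem (by simp), Finset.card_range]
      omega
  | zero => simp [bigOmega]
  | one =>
      rw [bigOmega, Nat.primeFactorsList_one, Nat.divisors_one]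
      rw [Finset.filter_singleton, if_neg not_isPrimePow_one]
      simp
  | coprime a b ha hb hab iha ihb =>
      have ha0 : a ≠ 0 := by omega
      have hb0 : b ≠ 0 := by omega
      have hunion : ((a*b).divisors).filter IsPrimePow
          = (a.divisors.filter IsPrimePow) ∪ (b.divisors.filter IsPrimePow) := by
        ext q
        simp only [Finset.mem_union, Finset.mem_filter, Nat.mem_divisors]
        constructor
        · rintro ⟨⟨hdvd, _⟩, hq⟩
          rcases (hab.isPrimePow_dvd_mul hq).1 hdvd with h | h
          · exact Or.inl ⟨⟨h, ha0⟩, hq⟩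
          · exact Or.inr ⟨⟨h, hb0⟩, hq⟩
        · rintro (⟨⟨hdvd, _⟩, hq⟩ | ⟨⟨hdvd, _⟩, hq⟩)
          · exact ⟨⟨hdvd.mul_right b, mul_ne_zero ha0 hb0⟩, hq⟩
          · exact ⟨⟨hdvd.mul_left a, mul_ne_zero ha0 hb0⟩, hq⟩
      have hdisj : Disjoint (a.divisors.filter IsPrimePow) (b.divisors.filter IsPrimePow) := by
        rw [Finset.disjoint_left]
        rintro q hqa hqb
        simp only [Finset.mem_filter, Nat.mem_divisors] at hqa hqb
        have : q ∣ Nat.gcd a b := Nat.dvd_gcd hqa.1.1 hqb.1.1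
        rw [hab] at this
        exact absurd (Nat.eq_one_of_dvd_one this) hqa.2.one_lt.ne'
      have hmul : bigOmega (a * b) = bigOmega a + bigOmega b := by
        rw [bigOmega, bigOmega, bigOmega,
          (Nat.perm_primeFactorsList_mul ha0 hb0).length_eq, List.length_append]
      rw [hmul, hunion, Finset.card_union_of_disjoint hdisj, iha, ihb]

lemma sum_card_eq (N : ℕ) :
    ∑ M ∈ Finset.Icc 1 N, ((M.divisors).filter IsPrimePow).card
      = ∑ q ∈ (Finset.Icc 2 N).filter IsPrimePow, N / q := by
  have step : ∀ M ∈ Finset.Icc 1 N, (((M.divisors).filter IsPrimePow).card : ℕ)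
      = ∑ q ∈ (Finset.Icc 2 N).filter IsPrimePow, if q ∣ M then 1 else 0 := by
    intro M hM
    rw [Finset.mem_Icc] at hM
    rw [Finset.sum_boole]
    have : ((Finset.Icc 2 N).filter IsPrimePow).filter (· ∣ M)
        = (M.divisors).filter IsPrimePow := by
      ext q
      simp only [Finset.mem_filter, Finset.mem_Icc, Nat.mem_divisors]
      constructor
      · rintro ⟨⟨_, hq⟩, hdvd⟩
        exact ⟨⟨hdvd, by omega⟩, hq⟩
      · rintro ⟨⟨hdvd, hM0⟩, hq⟩
        exact ⟨⟨⟨hq.two_le, le_trans (Nat.le_of_dvd (by omega) hdvd) hM.2⟩, hq⟩, hdvd⟩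
    rw [this, Nat.cast_id]
  rw [Finset.sum_congr rfl step, Finset.sum_comm]
  refine Finset.sum_congr rfl ?_
  intro q hq
  rw [Finset.sum_boole, Nat.cast_id]
  have h0 : (Finset.Icc 1 N).filter (q ∣ ·) = (Finset.Ioc 0 N).filter (q ∣ ·) := by
    rw [← Finset.Icc_add_one_left_eq_Ioc, zero_add]
  rw [h0, Nat.Ioc_filter_dvd_card_eq_div N q]

lemma key_identity {N : ℕ} (hN : 1 ≤ N) :
    L1 N + bigOmega N = 2 * ∑ q ∈ (Finset.Icc 2 N).filter IsPrimePow, N / q := by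
  rw [← sum_card_eq]
  have hsum : ∑ M ∈ Finset.Icc 1 N, ((M.divisors).filter IsPrimePow).card
      = ∑ M ∈ Finset.Icc 1 N, bigOmega M :=
    (Finset.sum_congr rfl fun M _ => (bigOmega_eq_card M).symm)
  rw [hsum]
  have hone : bigOmega 1 = 0 := by simp [bigOmega]
  have hsplit : ∑ M ∈ Finset.Icc 1 N, bigOmega M
      = bigOmega N + ∑ M ∈ Finset.Icc 2 (N - 1), bigOmega M := by
    match N, hN with
    | 1, _ => simp [hone]
    | (K+2), _ =>
      have h2 : (K+2) - 1 = K+1 := rfl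
      rw [h2, Finset.Icc_eq_cons_Ioc (show (1:ℕ) ≤ K+2 by omega), Finset.sum_cons,
        hone, zero_add, (by exact Finset.Icc_add_one_left_eq_Ioc 1 (K+1) :
          Finset.Icc 2 (K+1) = Finset.Ioc 1 (K+1))]
      have h4 : ∑ x ∈ Finset.Ioc 1 (K+2), bigOmega x
          = (∑ x ∈ Finset.Ioc 1 (K+1), bigOmega x) + bigOmega (K+2) :=
        Finset.sum_Ioc_succ_top (by omega) _
      omega
  rw [hsplit, L1]
  ring

lemma primeCount_le {m : ℕ} (hm : 2 ≤ m) (N : ℕ) :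
    ((((Finset.Icc 2 N).filter Nat.Prime)).card : ℝ)
      ≤ m + N * (Real.log 4 / Real.log m) := by
  classical
  set A := (Finset.Icc 2 N).filter Nat.Prime with hA
  have hsplit : (A.filter (· ≤ m)).card + (A.filter (¬ · ≤ m)).card = A.card :=
    Finset.card_filter_add_card_filter_not _
  have h1 : (A.filter (· ≤ m)).card ≤ m := by
    calc (A.filter (· ≤ m)).card ≤ (Finset.Icc 2 m).card := by
          apply Finset.card_le_card
          intro q hq
          simp only [hA, Finset.mem_filter, Finset.mem_Icc] at hq ⊢
          exact ⟨hq.1.1.1, hq.2⟩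
      _ ≤ m := by rw [Nat.card_Icc]; omega
  set c := (A.filter (¬ · ≤ m)).card with hc
  have hpow : m ^ c ≤ 4 ^ N := by
    calc m ^ c ≤ ∏ q ∈ A.filter (¬ · ≤ m), q := by
          apply Finset.pow_card_le_prod
          intro q hq
          simp only [Finset.mem_filter] at hq
          omega
      _ ≤ ∏ p ∈ (Finset.range (N+1)).filter Nat.Prime, p := by
          apply Finset.prod_le_prod_of_subset_of_one_le'
          · intro q hq
            simp only [hA, Finset.mem_filter, Finset.mem_Icc, Finset.mem_range] at hq ⊢
            exact ⟨by omega, hq.1.2⟩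
          · intro p hp _
            simp only [Finset.mem_filter] at hp
            exact hp.2.one_lt.le
      _ ≤ 4 ^ N := by simpa [primorial] using primorial_le_4_pow N
  have hlogm : 0 < Real.log m := Real.log_pos (by exact_mod_cast hm)
  have hcle : (c : ℝ) ≤ N * (Real.log 4 / Real.log m) := by
    have hcast : ((m : ℝ)) ^ c ≤ (4 : ℝ) ^ N := by exact_mod_cast hpow
    have hlog : (c : ℝ) * Real.log m ≤ (N : ℝ) * Real.log 4 := by
      have := Real.log_le_log (by positivity) hcast
      rwa [Real.log_pow, Real.log_pow] at this
    rw [mul_div_assoc'] at *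
    rw [le_div_iff₀ hlogm]
    calc (c:ℝ) * Real.log m ≤ (N:ℝ) * Real.log 4 := hlog
      _ = (N:ℝ) * Real.log 4 := rfl
  have : (A.card : ℝ) ≤ (m : ℝ) + c := by
    have : A.card ≤ m + c := by omega
    exact_mod_cast this
  calc (A.card : ℝ) ≤ (m : ℝ) + c := this
    _ ≤ m + N * (Real.log 4 / Real.log m) := by linarith

lemma tendsto_primeCount :
    Tendsto (fun N : ℕ => ((((Finset.Icc 2 N).filter Nat.Prime)).card : ℝ) / N)
      atTop (nhds 0) := by
  rw [Metric.tendsto_atTop]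
  intro ε hε
  set m : ℕ := ⌈Real.exp (2 * Real.log 4 / ε)⌉₊ + 2 with hm
  have hm2 : 2 ≤ m := by omega
  have hmlog : Real.log 4 / Real.log m < ε / 2 := by
    have hexp : Real.exp (2 * Real.log 4 / ε) < m := by
      have h1 : Real.exp (2 * Real.log 4 / ε) ≤ ⌈Real.exp (2 * Real.log 4 / ε)⌉₊ :=
        Nat.le_ceil _
      have h2 : (⌈Real.exp (2 * Real.log 4 / ε)⌉₊ : ℝ) < m := by
        rw [hm]; push_cast; linarith
      linarith
    have hlogm : 2 * Real.log 4 / ε < Real.log m := by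
      calc 2 * Real.log 4 / ε = Real.log (Real.exp (2 * Real.log 4 / ε)) :=
            (Real.log_exp _).symm
        _ < Real.log m := Real.log_lt_log (Real.exp_pos _) hexp
    have hlog4 : 0 < Real.log 4 := Real.log_pos (by norm_num)
    have hlogmpos : 0 < Real.log m := lt_of_le_of_lt (by positivity) hlogm
    rw [div_lt_iff₀ hlogmpos]
    calc Real.log 4 = ε / 2 * (2 * Real.log 4 / ε) := by field_simp
      _ < ε / 2 * Real.log m := by
          apply mul_lt_mul_of_pos_left hlogm (by linarith)
  refine ⟨⌈(2 * m : ℝ) / ε⌉₊ + 1, fun N hN => ?_⟩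
  have hN1 : 1 ≤ N := by omega
  have hNpos : (0 : ℝ) < N := by exact_mod_cast hN1
  have hmN : (m : ℝ) / N < ε / 2 := by
    rw [div_lt_iff₀ hNpos]
    have h1 : (2 * m : ℝ) / ε < N := by
      have := Nat.le_ceil ((2 * m : ℝ) / ε)
      have h2 : (⌈(2 * m : ℝ) / ε⌉₊ : ℝ) < N := by exact_mod_cast hN
      linarith
    rw [div_lt_iff₀ hε] at h1
    linarith
  have hb := primeCount_le hm2 N
  have hnonneg : (0 : ℝ) ≤ (((Finset.Icc 2 N).filter Nat.Prime).card : ℝ) / N := by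
    positivity
  rw [Real.dist_eq, sub_zero, abs_of_nonneg hnonneg]
  have hlog4 : 0 < Real.log 4 := Real.log_pos (by norm_num)
  have hlogm : 0 < Real.log m :=
    Real.log_pos (by exact_mod_cast hm2)
  calc (((Finset.Icc 2 N).filter Nat.Prime).card : ℝ) / N
      ≤ ((m : ℝ) + N * (Real.log 4 / Real.log m)) / N := by
        gcongr
    _ = (m : ℝ) / N + Real.log 4 / Real.log m := by field_simp
    _ < ε / 2 + ε / 2 := by apply add_lt_add hmN hmlog
    _ = ε := by ring

lemma pp_struct {q : ℕ} (h : IsPrimePow q) (hnp : ¬ q.Prime) :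
    q.minFac.Prime ∧ 2 ≤ q.factorization q.minFac
      ∧ q.minFac ^ (q.factorization q.minFac) = q := by
  have h1 := h.minFac_pow_factorization_eq
  have hq1 : q ≠ 1 := h.ne_one
  have hpf : q.minFac.Prime := Nat.minFac_prime hq1
  have hj0 : q.factorization q.minFac ≠ 0 := by
    intro h0; rw [h0, pow_zero] at h1; exact hq1 h1.symm
  have hj1 : q.factorization q.minFac ≠ 1 := by
    intro h0; rw [h0, pow_one] at h1; exact hnp (h1 ▸ hpf)
  exact ⟨hpf, by omega, h1⟩

lemma nonprime_primePow_card_le (N : ℕ) :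
    (((Finset.Icc 2 N).filter IsPrimePow).filter (fun q => ¬ q.Prime)).card
      ≤ N.sqrt * Nat.log 2 N := by
  classical
  set s := ((Finset.Icc 2 N).filter IsPrimePow).filter (fun q => ¬ q.Prime) with hs
  have hmem : ∀ q ∈ s, 2 ≤ q ∧ q ≤ N ∧ IsPrimePow q ∧ ¬ q.Prime := by
    intro q hq
    simp only [hs, Finset.mem_filter, Finset.mem_Icc] at hq
    exact ⟨hq.1.1.1, hq.1.1.2, hq.1.2, hq.2⟩
  have hcard : s.card ≤ ((Finset.Icc 2 N.sqrt) ×ˢ (Finset.Icc 2 (Nat.log 2 N))).card := by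
    apply Finset.card_le_card_of_injOn
      (fun q => (q.minFac, q.factorization q.minFac))
    · intro q hq
      obtain ⟨hq2, hqN, hpp, hnp⟩ := hmem q hq
      obtain ⟨hpf, hj2, hpow⟩ := pp_struct hpp hnp
      have hN0 : N ≠ 0 := by omega
      simp only [Finset.mem_coe, Finset.mem_product, Finset.mem_Icc]
      refine ⟨⟨hpf.two_le, ?_⟩, hj2, ?_⟩
      · rw [Nat.le_sqrt]
        calc q.minFac * q.minFac = q.minFac ^ 2 := (sq _).symm
          _ ≤ q.minFac ^ (q.factorization q.minFac) :=
              Nat.pow_le_pow_right hpf.pos hj2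
          _ = q := hpow
          _ ≤ N := hqN
      · rw [Nat.le_log_iff_pow_le (by norm_num) hN0]
        calc 2 ^ (q.factorization q.minFac)
            ≤ q.minFac ^ (q.factorization q.minFac) :=
              Nat.pow_le_pow_left hpf.two_le _
          _ = q := hpow
          _ ≤ N := hqN
    · intro q1 hq1 q2 hq2 heq
      obtain ⟨_, _, hpp1, hnp1⟩ := hmem q1 hq1
      obtain ⟨_, _, hpp2, hnp2⟩ := hmem q2 hq2
      obtain ⟨_, _, hpow1⟩ := pp_struct hpp1 hnp1
      obtain ⟨_, _, hpow2⟩ := pp_struct hpp2 hnp2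
      simp only [Prod.mk.injEq] at heq
      rw [← hpow1, ← hpow2, heq.2, heq.1]
  calc s.card ≤ ((Finset.Icc 2 N.sqrt) ×ˢ (Finset.Icc 2 (Nat.log 2 N))).card := hcard
    _ = (Finset.Icc 2 N.sqrt).card * (Finset.Icc 2 (Nat.log 2 N)).card :=
        Finset.card_product _ _
    _ ≤ N.sqrt * Nat.log 2 N := by
        rw [Nat.card_Icc, Nat.card_Icc]
        apply Nat.mul_le_mul <;> omega

lemma tendsto_log_div_sqrt :
    Tendsto (fun x : ℝ => Real.log x / x ^ ((1:ℝ)/2)) atTop (nhds 0) :=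
  (isLittleO_log_rpow_atTop (by norm_num : (0:ℝ) < 1/2)).tendsto_div_nhds_zero

lemma tendsto_sqrtlog :
    Tendsto (fun N : ℕ => ((N.sqrt * Nat.log 2 N : ℕ) : ℝ) / N) atTop (nhds 0) := by
  have hg : Tendsto (fun N : ℕ =>
      (1 / Real.log 2) * (Real.log N / (N:ℝ) ^ ((1:ℝ)/2))) atTop (nhds 0) := by
    have := (tendsto_log_div_sqrt.comp (tendsto_natCast_atTop_atTop (R := ℝ))).const_mul
      (1 / Real.log 2)
    simpa using this
  apply squeeze_zero_norm' _ hg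
  filter_upwards [eventually_ge_atTop 1] with N hN
  have hNpos : (0 : ℝ) < N := by exact_mod_cast hN
  have hlog2 : 0 < Real.log 2 := Real.log_pos (by norm_num)
  have hlogN : 0 ≤ Real.log N := Real.log_natCast_nonneg N
  have h1 : ((N.sqrt : ℕ) : ℝ) ≤ Real.sqrt N := Real.nat_sqrt_le_real_sqrt
  have h2 : ((Nat.log 2 N : ℕ) : ℝ) ≤ Real.log N / Real.log 2 := by
    have := Real.natLog_le_logb N 2
    rwa [Real.logb] at this
  have hnonneg : (0:ℝ) ≤ ((N.sqrt * Nat.log 2 N : ℕ) : ℝ) / N := by positivity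
  rw [Real.norm_eq_abs, abs_of_nonneg hnonneg]
  have hsqrtpos : 0 < Real.sqrt N := Real.sqrt_pos.mpr hNpos
  have key : ((N.sqrt * Nat.log 2 N : ℕ) : ℝ) / N
      ≤ (Real.sqrt N * (Real.log N / Real.log 2)) / N := by
    gcongr
    push_cast
    have h0a : (0:ℝ) ≤ (N.sqrt : ℝ) := by positivity
    exact mul_le_mul h1 h2 (by positivity) (Real.sqrt_nonneg _)
  refine key.trans ?_
  have hrw : (Real.sqrt N * (Real.log N / Real.log 2)) / N
      = (1 / Real.log 2) * (Real.log N / (N:ℝ) ^ ((1:ℝ)/2)) := by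
    rw [← Real.sqrt_eq_rpow]
    field_simp
    have hss : Real.sqrt N * Real.sqrt N = (N:ℝ) := Real.mul_self_sqrt hNpos.le
    linear_combination (Real.log N) * hss
  rw [hrw]

lemma tendsto_cardT :
    Tendsto (fun N : ℕ => (((Finset.Icc 2 N).filter IsPrimePow).card : ℝ) / N)
      atTop (nhds 0) := by
  apply squeeze_zero_norm'
    (a := fun N : ℕ => ((((Finset.Icc 2 N).filter Nat.Prime)).card : ℝ) / N
      + ((N.sqrt * Nat.log 2 N : ℕ) : ℝ) / N)
  · filter_upwards [eventually_ge_atTop 1] with N hN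
    have hNpos : (0:ℝ) < N := by exact_mod_cast hN
    have hcards : (((Finset.Icc 2 N).filter IsPrimePow).card : ℝ)
        ≤ ((((Finset.Icc 2 N).filter Nat.Prime)).card : ℝ)
          + ((N.sqrt * Nat.log 2 N : ℕ) : ℝ) := by
      have h1 : (((Finset.Icc 2 N).filter IsPrimePow).filter (fun q => q.Prime)).card
          + (((Finset.Icc 2 N).filter IsPrimePow).filter (fun q => ¬ q.Prime)).card
          = ((Finset.Icc 2 N).filter IsPrimePow).card :=
        Finset.card_filter_add_card_filter_not _
      have h2 : (((Finset.Icc 2 N).filter IsPrimePow).filter (fun q => q.Prime)).card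
          ≤ (((Finset.Icc 2 N).filter Nat.Prime)).card := by
        apply Finset.card_le_card
        intro q hq
        simp only [Finset.mem_filter] at hq ⊢
        exact ⟨hq.1.1, hq.2⟩
      have h3 := nonprime_primePow_card_le N
      push_cast
      have := h1
      have := h2
      have := h3
      exact_mod_cast (by omega :
        ((Finset.Icc 2 N).filter IsPrimePow).card
          ≤ (((Finset.Icc 2 N).filter Nat.Prime)).card + N.sqrt * Nat.log 2 N)
    rw [Real.norm_eq_abs, abs_of_nonneg (by positivity)]
    rw [← add_div]
    gcongr
  · simpa using tendsto_primeCount.add tendsto_sqrtlog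

theorem stmt_12 :
    Tendsto (fun N : ℕ =>
        ((L1 N : ℝ) -
          2 * N * ∑ q ∈ (Finset.Icc 2 N).filter IsPrimePow, (1 / (q : ℝ))) / N)
      atTop (nhds 0) := by
  apply squeeze_zero_norm'
    (a := fun N : ℕ => 3 * ((((Finset.Icc 2 N).filter IsPrimePow).card : ℝ) / N))
  · filter_upwards [eventually_ge_atTop 1] with N hN
    set T := (Finset.Icc 2 N).filter IsPrimePow with hT
    have hNpos : (0:ℝ) < N := by exact_mod_cast hN
    have hq2 : ∀ q ∈ T, 2 ≤ q := by
      intro q hq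
      simp only [hT, Finset.mem_filter, Finset.mem_Icc] at hq
      exact hq.1.1
    have hkeyR : (L1 N : ℝ) + bigOmega N = 2 * ∑ q ∈ T, ((N / q : ℕ) : ℝ) := by
      exact_mod_cast key_identity hN
    have hterm : ∀ q ∈ T, ((N / q : ℕ) : ℝ) ≤ (N:ℝ) * (1/q)
        ∧ (N:ℝ) * (1/q) ≤ ((N / q : ℕ) : ℝ) + 1 := by
      intro q hq
      have h2 := hq2 q hq
      have hq0 : 0 < q := by omega
      have hqR : (0:ℝ) < q := by exact_mod_cast hq0
      constructor
      · rw [mul_one_div]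
        exact Nat.cast_div_le
      · rw [mul_one_div, div_le_iff₀ hqR]
        have hnat : N < (N / q + 1) * q := (Nat.div_lt_iff_lt_mul hq0).1 (Nat.lt_succ_self _)
        have : (N:ℝ) < ((N / q : ℕ) + 1) * q := by exact_mod_cast hnat
        linarith
    have hlow : ∑ q ∈ T, ((N / q : ℕ) : ℝ) ≤ ∑ q ∈ T, (N:ℝ) * (1/q) :=
      Finset.sum_le_sum (fun q hq => (hterm q hq).1)
    have hhigh : ∑ q ∈ T, (N:ℝ) * (1/q) ≤ (∑ q ∈ T, ((N / q : ℕ) : ℝ)) + T.card := by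
      calc ∑ q ∈ T, (N:ℝ) * (1/q) ≤ ∑ q ∈ T, (((N / q : ℕ) : ℝ) + 1) :=
            Finset.sum_le_sum (fun q hq => (hterm q hq).2)
        _ = (∑ q ∈ T, ((N / q : ℕ) : ℝ)) + T.card := by
            rw [Finset.sum_add_distrib, Finset.sum_const, nsmul_eq_mul, mul_one]
    have hmulsum : (2:ℝ) * N * ∑ q ∈ T, (1/(q:ℝ)) = 2 * ∑ q ∈ T, (N:ℝ) * (1/q) := by
      rw [mul_assoc, Finset.mul_sum]
    have hOmega : (bigOmega N : ℝ) ≤ T.card := by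
      have h : bigOmega N ≤ T.card := by
        rw [bigOmega_eq_card]
        apply Finset.card_le_card
        intro q hq
        simp only [Finset.mem_filter, Nat.mem_divisors, hT, Finset.mem_Icc] at hq ⊢
        exact ⟨⟨hq.2.two_le, Nat.le_of_dvd (by omega) hq.1.1⟩, hq.2⟩
      exact_mod_cast h
    have habs : |(L1 N : ℝ) - 2 * N * ∑ q ∈ T, (1/(q:ℝ))| ≤ 3 * T.card := by
      rw [abs_le]
      constructor
      · rw [hmulsum]; linarith
      · rw [hmulsum]; linarith
    rw [Real.norm_eq_abs, abs_div, abs_of_pos hNpos]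
    calc |(L1 N : ℝ) - 2 * N * ∑ q ∈ T, (1/(q:ℝ))| / N ≤ (3 * T.card) / N := by gcongr
      _ = 3 * ((T.card : ℝ) / N) := by ring
  · simpa [mul_div_assoc] using tendsto_cardT.const_mul (3:ℝ)
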